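/- Let j ≥ 0 be a half-integer, m₁, m₂ half-integers with j+m₁, j+m₂ ∈ ℤ and −j ≤ m₁, m₂ ≤ j, n a real number, and ε ∈ {+1, −1}. Then for all ζ, ψ, φ ∈ ℝ and all θ ∈ (0, π): exp(−ε i φ) · ( −cot θ · ∂W/∂φ − ε i · ∂W/∂θ + csc θ · ∂W/∂ψ )(ζ,ψ,θ,φ) = i · √((j+εm₂)(j−εm₂+1)) · W^{(j,n)}_{m₁, m₂−ε}(ζ,ψ,θ,φ), where W denotes the function W^{(j,n)}_{m₁,m₂} and ∂W/∂φ, ∂W/∂θ, ∂W/∂ψ denote its partial derivatives in the respective variables. -/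

import Mathlib

/-- A half-integer is an element of `(1/2)ℤ`. -/
def HalfInt (x : ℝ) : Prop := ∃ k : ℤ, x = k / 2

/-- The little Wigner d-function `d^j_{m₁,m₂}(θ)`, defined as the finite sum
`Σ_p (−1)^{m₂−m₁+p} / ((j+m₁−p)!·p!·(m₂−m₁+p)!·(j−m₂−p)!) · sin(θ/2)^{m₂−m₁+2p} ·
cos(θ/2)^{2j+m₁−m₂−2p}` over integers `p` with `max(0, m₁−m₂) ≤ p ≤ min(j−m₂, j+m₁)`
(the factorials of the nonnegative integers appearing are expressed via the Gamma
function, `x! = Γ(x+1)`). -/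
noncomputable def wignerd (j m₁ m₂ θ : ℝ) : ℝ :=
  ∑ p ∈ Finset.Icc (max 0 ⌈m₁ - m₂⌉) ⌊min (j - m₂) (j + m₁)⌋,
    (-1 : ℝ) ^ (⌈m₂ - m₁⌉ + p) /
      (Real.Gamma (j + m₁ - (p : ℝ) + 1) * Real.Gamma ((p : ℝ) + 1) *
        Real.Gamma (m₂ - m₁ + (p : ℝ) + 1) * Real.Gamma (j - m₂ - (p : ℝ) + 1)) *
      Real.sin (θ / 2) ^ (⌈m₂ - m₁⌉ + 2 * p) *
      Real.cos (θ / 2) ^ (⌊2 * j + m₁ - m₂⌋ - 2 * p)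

open Classical in
/-- The Wigner D-function `W^{(j,n)}_{m₁,m₂}(ζ,ψ,θ,φ)`, with the convention that it is `0`
if `m₁` or `m₂` lies outside `[−j, j]` or `j ± m₁ ∉ ℤ` or `j ± m₂ ∉ ℤ`. -/
noncomputable def WignerD (j n m₁ m₂ : ℝ) (ζ ψ θ φ : ℝ) : ℂ :=
  if (-j ≤ m₁ ∧ m₁ ≤ j) ∧ (-j ≤ m₂ ∧ m₂ ≤ j) ∧
      (∃ a : ℤ, j + m₁ = a) ∧ (∃ a : ℤ, j - m₁ = a) ∧
      (∃ a : ℤ, j + m₂ = a) ∧ (∃ a : ℤ, j - m₂ = a) then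
    ((Real.sqrt (Real.Gamma (j + m₁ + 1) * Real.Gamma (j - m₁ + 1)) *
        Real.sqrt (Real.Gamma (j + m₂ + 1) * Real.Gamma (j - m₂ + 1)) : ℝ) : ℂ) *
      Complex.exp (Complex.I * n * ζ) *
      Complex.exp (Complex.I * (m₁ * ψ + m₂ * φ)) * ((wignerd j m₁ m₂ θ : ℝ) : ℂ)
  else 0

/-! ### Auxiliary machinery -/

/-- Reciprocal of `Γ(n+1)` for an integer `n`; vanishes for `n < 0`. -/
noncomputable def Rinv (n : ℤ) : ℝ := (Real.Gamma ((n : ℝ) + 1))⁻¹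

lemma Rinv_neg {n : ℤ} (hn : n < 0) : Rinv n = 0 := by
  have h : ((n : ℝ) + 1) = -(((-(n+1)).toNat : ℕ) : ℝ) := by
    have h0 : (0:ℤ) ≤ -(n+1) := by omega
    have h1 : (((-(n+1)).toNat : ℕ) : ℤ) = -(n+1) := Int.toNat_of_nonneg h0
    have h2 : (((-(n+1)).toNat : ℕ) : ℝ) = -((n:ℝ)+1) := by exact_mod_cast h1
    rw [h2]; ring
  rw [Rinv, h, Real.Gamma_neg_nat_eq_zero, inv_zero]

lemma Rinv_step (n : ℤ) : (n : ℝ) * Rinv n = Rinv (n - 1) := by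
  rcases lt_trichotomy n 0 with h | h | h
  · rw [Rinv_neg h, Rinv_neg (by omega), mul_zero]
  · subst h
    simp [Rinv, Real.Gamma_zero]
  · have hn0 : ((n:ℝ)) ≠ 0 := by positivity
    have hΓ : Real.Gamma ((n:ℝ) + 1) = (n:ℝ) * Real.Gamma (n:ℝ) := Real.Gamma_add_one hn0
    have hΓpos : (0:ℝ) < Real.Gamma (n:ℝ) := Real.Gamma_pos_of_pos (by positivity)
    rw [Rinv, Rinv, hΓ]
    push_cast
    rw [mul_inv, sub_add_cancel]
    field_simp

/-- The coefficient of the `p`-th term of the Wigner little-d sum, in terms of the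
integers `A = j+m₁`, `C = j+m₂`, `D = j−m₂`. -/
noncomputable def wcoef (A C D p : ℤ) : ℝ :=
  (-1 : ℝ) ^ (C - A + p) * (Rinv (A - p) * Rinv p * Rinv (C - A + p) * Rinv (D - p))

lemma wcoef_eq_zero {A C D p : ℤ} (h : p < 0 ∨ p < A - C ∨ A < p ∨ D < p) :
    wcoef A C D p = 0 := by
  rcases h with h | h | h | h
  · rw [wcoef, Rinv_neg h]; ring
  · rw [wcoef, Rinv_neg (show C - A + p < 0 by omega)]; ring
  · rw [wcoef, Rinv_neg (show A - p < 0 by omega)]; ring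
  · rw [wcoef, Rinv_neg (show D - p < 0 by omega)]; ring

lemma wcoef_rec_plus (A C D p : ℤ) :
    -((C - A + p : ℤ) : ℝ) * wcoef A C D p + ((A - p + 1 : ℤ) : ℝ) * wcoef A C D (p - 1)
      = ((D : ℝ) + 1) * wcoef A (C - 1) (D + 1) p := by
  have h1 := Rinv_step (C - A + p)
  have h2 := Rinv_step (A - p + 1)
  have h3 := Rinv_step p
  have h4 := Rinv_step (D - p + 1)
  rw [show A - p + 1 - 1 = A - p from by ring] at h2
  rw [show D - p + 1 - 1 = D - p from by ring] at h4
  simp only [wcoef]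
  rw [show A - (p - 1) = A - p + 1 from by ring, show C - A + (p - 1) = C - A + p - 1 from by ring,
    show D - (p - 1) = D - p + 1 from by ring, show C - 1 - A + p = C - A + p - 1 from by ring,
    show D + 1 - p = D - p + 1 from by ring]
  rw [show (-1 : ℝ) ^ (C - A + p) = -(-1 : ℝ) ^ (C - A + p - 1) from by
    rw [show C - A + p = (C - A + p - 1) + 1 from by ring,
      zpow_add_one₀ (by norm_num : (-1:ℝ) ≠ 0)]; ring]
  push_cast at h1 h2 h3 h4 ⊢
  linear_combination
    ((-1:ℝ) ^ (C - A + p - 1) * Rinv (A - p) * Rinv p * Rinv (D - p)) * h1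
    + ((-1:ℝ) ^ (C - A + p - 1) * Rinv (p - 1) * Rinv (C - A + p - 1) * Rinv (D - p + 1)) * h2
    - ((-1:ℝ) ^ (C - A + p - 1) * Rinv (A - p) * Rinv (C - A + p - 1) * Rinv (D - p + 1)) * h3
    - ((-1:ℝ) ^ (C - A + p - 1) * Rinv (A - p) * Rinv p * Rinv (C - A + p - 1)) * h4

lemma wcoef_rec_minus (A C D p : ℤ) :
    ((p + 1 : ℤ) : ℝ) * wcoef A C D (p + 1) - ((D - p : ℤ) : ℝ) * wcoef A C D p
      = ((C : ℝ) + 1) * wcoef A (C + 1) (D - 1) p := by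
  have g1 := Rinv_step (p + 1)
  have g2 := Rinv_step (A - p)
  have g3 := Rinv_step (D - p)
  have g4 := Rinv_step (C - A + p + 1)
  rw [show p + 1 - 1 = p from by ring] at g1
  rw [show C - A + p + 1 - 1 = C - A + p from by ring] at g4
  simp only [wcoef]
  rw [show A - (p + 1) = A - p - 1 from by ring, show C - A + (p + 1) = C - A + p + 1 from by ring,
    show D - (p + 1) = D - p - 1 from by ring, show C + 1 - A + p = C - A + p + 1 from by ring,
    show D - 1 - p = D - p - 1 from by ring]
  rw [show (-1 : ℝ) ^ (C - A + p + 1) = -(-1 : ℝ) ^ (C - A + p) from by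
    rw [zpow_add_one₀ (by norm_num : (-1:ℝ) ≠ 0)]; ring]
  push_cast at g1 g2 g3 g4 ⊢
  linear_combination
    (-(-1:ℝ) ^ (C - A + p) * Rinv (A - p - 1) * Rinv (C - A + p + 1) * Rinv (D - p - 1)) * g1
    + ((-1:ℝ) ^ (C - A + p) * Rinv p * Rinv (C - A + p + 1) * Rinv (D - p - 1)) * g2
    + (-(-1:ℝ) ^ (C - A + p) * Rinv (A - p) * Rinv p * Rinv (C - A + p)) * g3
    + ((-1:ℝ) ^ (C - A + p) * Rinv (A - p) * Rinv p * Rinv (D - p - 1)) * g4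

lemma sum_shift {L U : ℤ} (g : ℤ → ℝ) (h1 : g (L - 1) = 0) (h2 : g U = 0) :
    ∑ p ∈ Finset.Icc L U, g (p - 1) = ∑ p ∈ Finset.Icc L U, g p := by
  have e1 : ∑ p ∈ Finset.Icc L U, g (p - 1) = ∑ p ∈ Finset.Icc (L - 1) (U - 1), g p := by
    rw [show Finset.Icc (L-1) (U-1) = Finset.map (addRightEmbedding (-1)) (Finset.Icc L U) from by
        rw [Finset.map_add_right_Icc]; norm_num [sub_eq_add_neg],
      Finset.sum_map]
    simp [addRightEmbedding, sub_eq_add_neg]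
  have e2 : ∑ p ∈ Finset.Icc (L - 1) (U - 1), g p = ∑ p ∈ Finset.Icc (L - 1) U, g p := by
    apply Finset.sum_subset (Finset.Icc_subset_Icc le_rfl (by omega))
    intro x hx hnx
    simp only [Finset.mem_Icc] at hx hnx
    have : x = U := by omega
    rwa [this]
  have e3 : ∑ p ∈ Finset.Icc L U, g p = ∑ p ∈ Finset.Icc (L - 1) U, g p := by
    apply Finset.sum_subset (Finset.Icc_subset_Icc (by omega) le_rfl)
    intro x hx hnx
    simp only [Finset.mem_Icc] at hx hnx
    have : x = L - 1 := by omega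
    rwa [this]
  rw [e1, e2, e3]

lemma wignerd_eq (j m₁ m₂ : ℝ) (A C D : ℤ) (hA : j + m₁ = A) (hC : j + m₂ = C)
    (hD : j - m₂ = D) (θ : ℝ) :
    wignerd j m₁ m₂ θ = ∑ p ∈ Finset.Icc (max 0 (A - C)) (min D A),
      wcoef A C D p * Real.sin (θ / 2) ^ (C - A + 2 * p) *
        Real.cos (θ / 2) ^ (A + D - 2 * p) := by
  have h12 : m₁ - m₂ = ((A - C : ℤ) : ℝ) := by push_cast; linarith
  have h21 : m₂ - m₁ = ((C - A : ℤ) : ℝ) := by push_cast; linarith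
  have h2j : 2 * j + m₁ - m₂ = ((A + D : ℤ) : ℝ) := by push_cast; linarith
  rw [wignerd, h12, h21, h2j, Int.ceil_intCast, Int.ceil_intCast, Int.floor_intCast,
    hD, hA, show min ((D:ℤ):ℝ) ((A:ℤ):ℝ) = ((min D A : ℤ) : ℝ) from by
      rw [Int.cast_min], Int.floor_intCast]
  apply Finset.sum_congr rfl
  intro p _
  have e1 : (A : ℝ) - (p : ℝ) + 1 = ((A - p : ℤ) : ℝ) + 1 := by push_cast; ring
  have e2 : ((C - A : ℤ) : ℝ) + (p : ℝ) + 1 = ((C - A + p : ℤ) : ℝ) + 1 := by push_cast; ring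
  have e3 : (D : ℝ) - (p : ℝ) + 1 = ((D - p : ℤ) : ℝ) + 1 := by push_cast; ring
  rw [e1, e2, e3]
  rw [wcoef, Rinv, Rinv, Rinv, Rinv]
  rw [div_eq_mul_inv, mul_inv, mul_inv, mul_inv]

/-- The derivative in `θ` of the little Wigner d-function, as an explicit sum. -/
noncomputable def wignerdDeriv (A C D : ℤ) (θ : ℝ) : ℝ :=
  ∑ p ∈ Finset.Icc (max 0 (A - C)) (min D A), wcoef A C D p *
    (((C - A + 2*p : ℤ):ℝ) * Real.sin (θ/2) ^ (C - A + 2*p - 1) * (Real.cos (θ/2) * 2⁻¹)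
        * Real.cos (θ/2) ^ (A + D - 2*p)
      + Real.sin (θ/2) ^ (C - A + 2*p) * (((A + D - 2*p : ℤ):ℝ)
        * Real.cos (θ/2) ^ (A + D - 2*p - 1) * (-Real.sin (θ/2) * 2⁻¹)))

lemma wignerd_hasDerivAt (j m₁ m₂ : ℝ) (A C D : ℤ) (hA : j + m₁ = A) (hC : j + m₂ = C)
    (hD : j - m₂ = D) (θ : ℝ) (hx : Real.sin (θ / 2) ≠ 0) (hy : Real.cos (θ / 2) ≠ 0) :
    HasDerivAt (fun t => wignerd j m₁ m₂ t) (wignerdDeriv A C D θ) θ := by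
  unfold wignerdDeriv
  have hfun : (fun t => wignerd j m₁ m₂ t) = fun t =>
      ∑ p ∈ Finset.Icc (max 0 (A - C)) (min D A),
        wcoef A C D p * Real.sin (t / 2) ^ (C - A + 2 * p) *
          Real.cos (t / 2) ^ (A + D - 2 * p) :=
    funext fun t => wignerd_eq j m₁ m₂ A C D hA hC hD t
  rw [hfun]
  apply HasDerivAt.fun_sum
  intro p _
  have hs : HasDerivAt (fun t : ℝ => Real.sin (t / 2)) (Real.cos (θ / 2) * 2⁻¹) θ := by
    simpa [Function.comp_def] using (Real.hasDerivAt_sin (θ / 2)).comp θ ((hasDerivAt_id θ).div_const 2)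
  have hc : HasDerivAt (fun t : ℝ => Real.cos (t / 2)) (-Real.sin (θ / 2) * 2⁻¹) θ := by
    simpa [Function.comp_def] using (Real.hasDerivAt_cos (θ / 2)).comp θ ((hasDerivAt_id θ).div_const 2)
  have hzs : HasDerivAt (fun t : ℝ => Real.sin (t / 2) ^ (C - A + 2 * p))
      (((C - A + 2 * p : ℤ) : ℝ) * Real.sin (θ / 2) ^ (C - A + 2 * p - 1) *
        (Real.cos (θ / 2) * 2⁻¹)) θ :=
    by
      have h := (hasDerivAt_zpow (C - A + 2 * p) _ (Or.inl hx)).comp θ hs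
      exact h
  have hzc : HasDerivAt (fun t : ℝ => Real.cos (t / 2) ^ (A + D - 2 * p))
      (((A + D - 2 * p : ℤ) : ℝ) * Real.cos (θ / 2) ^ (A + D - 2 * p - 1) *
        (-Real.sin (θ / 2) * 2⁻¹)) θ :=
    by
      have h := (hasDerivAt_zpow (A + D - 2 * p) _ (Or.inl hy)).comp θ hc
      exact h
  have := (hzs.const_mul (wcoef A C D p)).fun_mul hzc
  exact this.congr_deriv (by ring)

lemma per_term_plus (A C D p : ℤ) (m₁ m₂ x y w : ℝ)
    (hm1 : m₁ = (2*(A:ℝ) - C - D)/2) (hm2 : m₂ = ((C:ℝ) - D)/2)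
    (hx : x ≠ 0) (hy : y ≠ 0) (hxy : x^2 + y^2 = 1) :
    -(w * (((C - A + 2*p : ℤ):ℝ) * x^(C - A + 2*p - 1) * (y * 2⁻¹) * y^(A + D - 2*p)
        + x^(C - A + 2*p) * (((A + D - 2*p : ℤ):ℝ) * y^(A + D - 2*p - 1) * (-x * 2⁻¹))))
      + (m₁ * (2*x*y)⁻¹ - m₂ * ((y^2 - x^2)/(2*x*y))) * (w * x^(C - A + 2*p) * y^(A + D - 2*p))
    = -((C - A + p : ℤ):ℝ) * w * x^(C - A + 2*p - 1) * y^(A + D - 2*p + 1)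
      + ((A - p : ℤ):ℝ) * w * x^(C - A + 2*p + 1) * y^(A + D - 2*p - 1) := by
  rw [show C - A + 2*p + 1 = (C - A + 2*p - 1) + 1 + 1 from by ring,
    zpow_add_one₀ hx, zpow_add_one₀ hx]
  rw [show C - A + 2*p = (C - A + 2*p - 1) + 1 from by ring, zpow_add_one₀ hx]
  rw [show A + D - 2*p + 1 = (A + D - 2*p - 1) + 1 + 1 from by ring,
    zpow_add_one₀ hy, zpow_add_one₀ hy]
  rw [show A + D - 2*p = (A + D - 2*p - 1) + 1 from by ring, zpow_add_one₀ hy]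
  simp only [add_sub_cancel_right]
  subst hm1 hm2
  push_cast
  field_simp
  linear_combination (w * ((C:ℝ) + D - 2*(A:ℝ))) * hxy

lemma per_term_minus (A C D p : ℤ) (m₁ m₂ x y w : ℝ)
    (hm1 : m₁ = (2*(A:ℝ) - C - D)/2) (hm2 : m₂ = ((C:ℝ) - D)/2)
    (hx : x ≠ 0) (hy : y ≠ 0) (hxy : x^2 + y^2 = 1) :
    (w * (((C - A + 2*p : ℤ):ℝ) * x^(C - A + 2*p - 1) * (y * 2⁻¹) * y^(A + D - 2*p)
        + x^(C - A + 2*p) * (((A + D - 2*p : ℤ):ℝ) * y^(A + D - 2*p - 1) * (-x * 2⁻¹))))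
      + (m₁ * (2*x*y)⁻¹ - m₂ * ((y^2 - x^2)/(2*x*y))) * (w * x^(C - A + 2*p) * y^(A + D - 2*p))
    = ((p : ℤ):ℝ) * w * x^(C - A + 2*p - 1) * y^(A + D - 2*p + 1)
      - ((D - p : ℤ):ℝ) * w * x^(C - A + 2*p + 1) * y^(A + D - 2*p - 1) := by
  rw [show C - A + 2*p + 1 = (C - A + 2*p - 1) + 1 + 1 from by ring,
    zpow_add_one₀ hx, zpow_add_one₀ hx]
  rw [show C - A + 2*p = (C - A + 2*p - 1) + 1 from by ring, zpow_add_one₀ hx]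
  rw [show A + D - 2*p + 1 = (A + D - 2*p - 1) + 1 + 1 from by ring,
    zpow_add_one₀ hy, zpow_add_one₀ hy]
  rw [show A + D - 2*p = (A + D - 2*p - 1) + 1 from by ring, zpow_add_one₀ hy]
  simp only [add_sub_cancel_right]
  subst hm1 hm2
  push_cast
  field_simp
  linear_combination (w * ((C:ℝ) + (D:ℝ) - 2*(A:ℝ))) * hxy
lemma key_sum_plus (A C D : ℤ) (hA0 : 0 ≤ A) (hD0 : 0 ≤ D) (m₁ m₂ x y : ℝ)
    (hm1 : m₁ = (2*(A:ℝ) - C - D)/2) (hm2 : m₂ = ((C:ℝ) - D)/2)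
    (hx : x ≠ 0) (hy : y ≠ 0) (hxy : x^2 + y^2 = 1) :
    -(∑ p ∈ Finset.Icc (max 0 (A - C)) (min D A), wcoef A C D p *
        (((C - A + 2*p : ℤ):ℝ) * x^(C - A + 2*p - 1) * (y * 2⁻¹) * y^(A + D - 2*p)
          + x^(C - A + 2*p) * (((A + D - 2*p : ℤ):ℝ) * y^(A + D - 2*p - 1) * (-x * 2⁻¹))))
      + (m₁ * (2*x*y)⁻¹ - m₂ * ((y^2 - x^2)/(2*x*y))) *
        ∑ p ∈ Finset.Icc (max 0 (A - C)) (min D A),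
          wcoef A C D p * x^(C - A + 2*p) * y^(A + D - 2*p)
      = ((D:ℝ)+1) * ∑ p ∈ Finset.Icc (max 0 (A - (C-1))) (min (D+1) A),
          wcoef A (C-1) (D+1) p * x^(C - 1 - A + 2*p) * y^(A + (D+1) - 2*p) := by
  have hsub1 : Finset.Icc (max 0 (A - C)) (min D A) ⊆ Finset.Icc (-1) (A + D + 1) :=
    Finset.Icc_subset_Icc (by omega) (by omega)
  have hsub2 : Finset.Icc (max 0 (A - (C-1))) (min (D+1) A) ⊆ Finset.Icc (-1) (A + D + 1) :=
    Finset.Icc_subset_Icc (by omega) (by omega)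
  have hext1 : (∑ p ∈ Finset.Icc (max 0 (A - C)) (min D A), wcoef A C D p *
        (((C - A + 2*p : ℤ):ℝ) * x^(C - A + 2*p - 1) * (y * 2⁻¹) * y^(A + D - 2*p)
          + x^(C - A + 2*p) * (((A + D - 2*p : ℤ):ℝ) * y^(A + D - 2*p - 1) * (-x * 2⁻¹))))
      = ∑ p ∈ Finset.Icc (-1) (A + D + 1), wcoef A C D p *
        (((C - A + 2*p : ℤ):ℝ) * x^(C - A + 2*p - 1) * (y * 2⁻¹) * y^(A + D - 2*p)
          + x^(C - A + 2*p) * (((A + D - 2*p : ℤ):ℝ) * y^(A + D - 2*p - 1) * (-x * 2⁻¹))) := by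
    refine Finset.sum_subset hsub1 fun p _ hnp => ?_
    simp only [Finset.mem_Icc] at hnp
    rw [wcoef_eq_zero (by omega), zero_mul]
  have hext2 : (∑ p ∈ Finset.Icc (max 0 (A - C)) (min D A),
        wcoef A C D p * x^(C - A + 2*p) * y^(A + D - 2*p))
      = ∑ p ∈ Finset.Icc (-1) (A + D + 1),
        wcoef A C D p * x^(C - A + 2*p) * y^(A + D - 2*p) := by
    refine Finset.sum_subset hsub1 fun p _ hnp => ?_
    simp only [Finset.mem_Icc] at hnp
    rw [wcoef_eq_zero (by omega), zero_mul, zero_mul]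
  have hext3 : (∑ p ∈ Finset.Icc (max 0 (A - (C-1))) (min (D+1) A),
        wcoef A (C-1) (D+1) p * x^(C - 1 - A + 2*p) * y^(A + (D+1) - 2*p))
      = ∑ p ∈ Finset.Icc (-1) (A + D + 1),
        wcoef A (C-1) (D+1) p * x^(C - 1 - A + 2*p) * y^(A + (D+1) - 2*p) := by
    refine Finset.sum_subset hsub2 fun p _ hnp => ?_
    simp only [Finset.mem_Icc] at hnp
    rw [wcoef_eq_zero (by omega), zero_mul, zero_mul]
  rw [hext1, hext2, hext3, Finset.mul_sum, ← Finset.sum_neg_distrib, ← Finset.sum_add_distrib,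
    Finset.mul_sum]
  have step1 : (∑ p ∈ Finset.Icc (-1) (A + D + 1),
      (-(wcoef A C D p *
        (((C - A + 2*p : ℤ):ℝ) * x^(C - A + 2*p - 1) * (y * 2⁻¹) * y^(A + D - 2*p)
          + x^(C - A + 2*p) * (((A + D - 2*p : ℤ):ℝ) * y^(A + D - 2*p - 1) * (-x * 2⁻¹))))
        + (m₁ * (2*x*y)⁻¹ - m₂ * ((y^2 - x^2)/(2*x*y))) *
            (wcoef A C D p * x^(C - A + 2*p) * y^(A + D - 2*p))))
      = ∑ p ∈ Finset.Icc (-1) (A + D + 1),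
        (-((C - A + p : ℤ):ℝ) * wcoef A C D p * x^(C - A + 2*p - 1) * y^(A + D - 2*p + 1)
          + ((A - p : ℤ):ℝ) * wcoef A C D p * x^(C - A + 2*p + 1) * y^(A + D - 2*p - 1)) :=
    Finset.sum_congr rfl fun p _ =>
      per_term_plus A C D p m₁ m₂ x y (wcoef A C D p) hm1 hm2 hx hy hxy
  rw [step1, Finset.sum_add_distrib]
  have hshift : (∑ p ∈ Finset.Icc (-1) (A + D + 1),
        ((A - p : ℤ):ℝ) * wcoef A C D p * x^(C - A + 2*p + 1) * y^(A + D - 2*p - 1))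
      = ∑ p ∈ Finset.Icc (-1) (A + D + 1),
        ((A - (p-1) : ℤ):ℝ) * wcoef A C D (p-1) * x^(C - A + 2*(p-1) + 1)
          * y^(A + D - 2*(p-1) - 1) := by
    refine (sum_shift
      (fun q => ((A - q : ℤ):ℝ) * wcoef A C D q * x^(C - A + 2*q + 1) * y^(A + D - 2*q - 1))
      ?_ ?_).symm
    · have h0 : wcoef A C D (-1 - 1) = 0 := wcoef_eq_zero (by omega)
      simp only [h0]; ring
    · have h0 : wcoef A C D (A + D + 1) = 0 := wcoef_eq_zero (by omega)
      simp only [h0]; ring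
  rw [hshift, ← Finset.sum_add_distrib]
  refine Finset.sum_congr rfl fun p _ => ?_
  rw [show C - A + 2*(p-1) + 1 = C - A + 2*p - 1 from by ring,
    show A + D - 2*(p-1) - 1 = A + D - 2*p + 1 from by ring,
    show C - 1 - A + 2*p = C - A + 2*p - 1 from by ring,
    show A + (D+1) - 2*p = A + D - 2*p + 1 from by ring,
    show A - (p-1) = A - p + 1 from by ring]
  have hrec := wcoef_rec_plus A C D p
  push_cast at hrec ⊢
  linear_combination (x^(C - A + 2*p - 1) * y^(A + D - 2*p + 1)) * hrec

lemma key_sum_minus (A C D : ℤ) (hA0 : 0 ≤ A) (hD0 : 0 ≤ D) (m₁ m₂ x y : ℝ)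
    (hm1 : m₁ = (2*(A:ℝ) - C - D)/2) (hm2 : m₂ = ((C:ℝ) - D)/2)
    (hx : x ≠ 0) (hy : y ≠ 0) (hxy : x^2 + y^2 = 1) :
    (∑ p ∈ Finset.Icc (max 0 (A - C)) (min D A), wcoef A C D p *
        (((C - A + 2*p : ℤ):ℝ) * x^(C - A + 2*p - 1) * (y * 2⁻¹) * y^(A + D - 2*p)
          + x^(C - A + 2*p) * (((A + D - 2*p : ℤ):ℝ) * y^(A + D - 2*p - 1) * (-x * 2⁻¹))))
      + (m₁ * (2*x*y)⁻¹ - m₂ * ((y^2 - x^2)/(2*x*y))) *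
        ∑ p ∈ Finset.Icc (max 0 (A - C)) (min D A),
          wcoef A C D p * x^(C - A + 2*p) * y^(A + D - 2*p)
      = ((C:ℝ)+1) * ∑ p ∈ Finset.Icc (max 0 (A - (C+1))) (min (D-1) A),
          wcoef A (C+1) (D-1) p * x^(C + 1 - A + 2*p) * y^(A + (D-1) - 2*p) := by
  have hsub1 : Finset.Icc (max 0 (A - C)) (min D A) ⊆ Finset.Icc (-1) (A + D + 1) :=
    Finset.Icc_subset_Icc (by omega) (by omega)
  have hsub2 : Finset.Icc (max 0 (A - (C+1))) (min (D-1) A) ⊆ Finset.Icc (-1) (A + D + 1) :=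
    Finset.Icc_subset_Icc (by omega) (by omega)
  have hext1 : (∑ p ∈ Finset.Icc (max 0 (A - C)) (min D A), wcoef A C D p *
        (((C - A + 2*p : ℤ):ℝ) * x^(C - A + 2*p - 1) * (y * 2⁻¹) * y^(A + D - 2*p)
          + x^(C - A + 2*p) * (((A + D - 2*p : ℤ):ℝ) * y^(A + D - 2*p - 1) * (-x * 2⁻¹))))
      = ∑ p ∈ Finset.Icc (-1) (A + D + 1), wcoef A C D p *
        (((C - A + 2*p : ℤ):ℝ) * x^(C - A + 2*p - 1) * (y * 2⁻¹) * y^(A + D - 2*p)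
          + x^(C - A + 2*p) * (((A + D - 2*p : ℤ):ℝ) * y^(A + D - 2*p - 1) * (-x * 2⁻¹))) := by
    refine Finset.sum_subset hsub1 fun p _ hnp => ?_
    simp only [Finset.mem_Icc] at hnp
    rw [wcoef_eq_zero (by omega), zero_mul]
  have hext2 : (∑ p ∈ Finset.Icc (max 0 (A - C)) (min D A),
        wcoef A C D p * x^(C - A + 2*p) * y^(A + D - 2*p))
      = ∑ p ∈ Finset.Icc (-1) (A + D + 1),
        wcoef A C D p * x^(C - A + 2*p) * y^(A + D - 2*p) := by
    refine Finset.sum_subset hsub1 fun p _ hnp => ?_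
    simp only [Finset.mem_Icc] at hnp
    rw [wcoef_eq_zero (by omega), zero_mul, zero_mul]
  have hext3 : (∑ p ∈ Finset.Icc (max 0 (A - (C+1))) (min (D-1) A),
        wcoef A (C+1) (D-1) p * x^(C + 1 - A + 2*p) * y^(A + (D-1) - 2*p))
      = ∑ p ∈ Finset.Icc (-1) (A + D + 1),
        wcoef A (C+1) (D-1) p * x^(C + 1 - A + 2*p) * y^(A + (D-1) - 2*p) := by
    refine Finset.sum_subset hsub2 fun p _ hnp => ?_
    simp only [Finset.mem_Icc] at hnp
    rw [wcoef_eq_zero (by omega), zero_mul, zero_mul]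
  rw [hext1, hext2, hext3, Finset.mul_sum, ← Finset.sum_add_distrib, Finset.mul_sum]
  have step1 : (∑ p ∈ Finset.Icc (-1) (A + D + 1),
      ((wcoef A C D p *
        (((C - A + 2*p : ℤ):ℝ) * x^(C - A + 2*p - 1) * (y * 2⁻¹) * y^(A + D - 2*p)
          + x^(C - A + 2*p) * (((A + D - 2*p : ℤ):ℝ) * y^(A + D - 2*p - 1) * (-x * 2⁻¹))))
        + (m₁ * (2*x*y)⁻¹ - m₂ * ((y^2 - x^2)/(2*x*y))) *
            (wcoef A C D p * x^(C - A + 2*p) * y^(A + D - 2*p))))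
      = ∑ p ∈ Finset.Icc (-1) (A + D + 1),
        (((p : ℤ):ℝ) * wcoef A C D p * x^(C - A + 2*p - 1) * y^(A + D - 2*p + 1)
          - ((D - p : ℤ):ℝ) * wcoef A C D p * x^(C - A + 2*p + 1) * y^(A + D - 2*p - 1)) :=
    Finset.sum_congr rfl fun p _ =>
      per_term_minus A C D p m₁ m₂ x y (wcoef A C D p) hm1 hm2 hx hy hxy
  rw [step1, Finset.sum_sub_distrib]
  have hshift : (∑ p ∈ Finset.Icc (-1) (A + D + 1),
        ((p : ℤ):ℝ) * wcoef A C D p * x^(C - A + 2*p - 1) * y^(A + D - 2*p + 1))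
      = ∑ p ∈ Finset.Icc (-1) (A + D + 1),
        (((p+1 : ℤ):ℝ) * wcoef A C D (p+1) * x^(C - A + 2*(p+1) - 1)
          * y^(A + D - 2*(p+1) + 1)) := by
    have := sum_shift (L := -1) (U := A + D + 1)
      (fun q => ((q+1 : ℤ):ℝ) * wcoef A C D (q+1) * x^(C - A + 2*(q+1) - 1)
        * y^(A + D - 2*(q+1) + 1)) ?_ ?_
    · refine Eq.trans ?_ this
      refine Finset.sum_congr rfl fun p _ => ?_
      rw [show p - 1 + 1 = p from by ring]
    · have h0 : wcoef A C D (-1 - 1 + 1) = 0 := wcoef_eq_zero (by omega)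
      simp only [h0]; ring
    · have h0 : wcoef A C D (A + D + 1 + 1) = 0 := wcoef_eq_zero (by omega)
      simp only [h0]; ring
  rw [hshift, ← Finset.sum_sub_distrib]
  refine Finset.sum_congr rfl fun p _ => ?_
  rw [show C - A + 2*(p+1) - 1 = C - A + 2*p + 1 from by ring,
    show A + D - 2*(p+1) + 1 = A + D - 2*p - 1 from by ring,
    show C + 1 - A + 2*p = C - A + 2*p + 1 from by ring,
    show A + (D-1) - 2*p = A + D - 2*p - 1 from by ring]
  have hrec := wcoef_rec_minus A C D p
  push_cast at hrec ⊢
  linear_combination (x^(C - A + 2*p + 1) * y^(A + D - 2*p - 1)) * hrec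
lemma real_key_plus (j m₁ m₂ : ℝ) (A C D : ℤ) (hA : j + m₁ = A) (hC : j + m₂ = C)
    (hD : j - m₂ = D) (hA0 : 0 ≤ A) (hD0 : 0 ≤ D) {θ : ℝ}
    (hθ1 : 0 < θ) (hθ2 : θ < Real.pi) :
    -wignerdDeriv A C D θ
      + (m₁ * (Real.sin θ)⁻¹ - m₂ * (Real.cos θ / Real.sin θ)) * wignerd j m₁ m₂ θ
      = ((D:ℝ) + 1) * wignerd j m₁ (m₂ - 1) θ := by
  have hpi := Real.pi_pos
  have hx : Real.sin (θ/2) ≠ 0 :=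
    ne_of_gt (Real.sin_pos_of_pos_of_lt_pi (by linarith) (by linarith))
  have hy : Real.cos (θ/2) ≠ 0 :=
    ne_of_gt (Real.cos_pos_of_mem_Ioo ⟨by linarith, by linarith⟩)
  have hxy := Real.sin_sq_add_cos_sq (θ/2)
  have hsin : Real.sin θ = 2 * Real.sin (θ/2) * Real.cos (θ/2) := by
    have h := Real.sin_two_mul (θ/2)
    rw [show 2*(θ/2) = θ from by ring] at h
    exact h
  have hcos : Real.cos θ = Real.cos (θ/2)^2 - Real.sin (θ/2)^2 := by
    have h := Real.cos_two_mul (θ/2)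
    rw [show 2*(θ/2) = θ from by ring] at h
    linarith
  have hm1' : m₁ = (2*(A:ℝ) - C - D)/2 := by linarith
  have hm2' : m₂ = ((C:ℝ) - D)/2 := by linarith
  rw [wignerd_eq j m₁ m₂ A C D hA hC hD θ,
    wignerd_eq j m₁ (m₂-1) A (C-1) (D+1) hA (by push_cast; linarith) (by push_cast; linarith) θ,
    wignerdDeriv, hsin, hcos]
  exact key_sum_plus A C D hA0 hD0 m₁ m₂ _ _ hm1' hm2' hx hy hxy

lemma real_key_minus (j m₁ m₂ : ℝ) (A C D : ℤ) (hA : j + m₁ = A) (hC : j + m₂ = C)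
    (hD : j - m₂ = D) (hA0 : 0 ≤ A) (hD0 : 0 ≤ D) {θ : ℝ}
    (hθ1 : 0 < θ) (hθ2 : θ < Real.pi) :
    wignerdDeriv A C D θ
      + (m₁ * (Real.sin θ)⁻¹ - m₂ * (Real.cos θ / Real.sin θ)) * wignerd j m₁ m₂ θ
      = ((C:ℝ) + 1) * wignerd j m₁ (m₂ + 1) θ := by
  have hpi := Real.pi_pos
  have hx : Real.sin (θ/2) ≠ 0 :=
    ne_of_gt (Real.sin_pos_of_pos_of_lt_pi (by linarith) (by linarith))
  have hy : Real.cos (θ/2) ≠ 0 :=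
    ne_of_gt (Real.cos_pos_of_mem_Ioo ⟨by linarith, by linarith⟩)
  have hxy := Real.sin_sq_add_cos_sq (θ/2)
  have hsin : Real.sin θ = 2 * Real.sin (θ/2) * Real.cos (θ/2) := by
    have h := Real.sin_two_mul (θ/2)
    rw [show 2*(θ/2) = θ from by ring] at h
    exact h
  have hcos : Real.cos θ = Real.cos (θ/2)^2 - Real.sin (θ/2)^2 := by
    have h := Real.cos_two_mul (θ/2)
    rw [show 2*(θ/2) = θ from by ring] at h
    linarith
  have hm1' : m₁ = (2*(A:ℝ) - C - D)/2 := by linarith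
  have hm2' : m₂ = ((C:ℝ) - D)/2 := by linarith
  rw [wignerd_eq j m₁ m₂ A C D hA hC hD θ,
    wignerd_eq j m₁ (m₂+1) A (C+1) (D-1) hA (by push_cast; linarith) (by push_cast; linarith) θ,
    wignerdDeriv, hsin, hcos]
  exact key_sum_minus A C D hA0 hD0 m₁ m₂ _ _ hm1' hm2' hx hy hxy

lemma sqrt_aux {a b : ℝ} (ha : 0 ≤ a) (hb : 0 ≤ b) (h : a ^ 2 = b ^ 2) : a = b := by
  rw [← Real.sqrt_sq ha, ← Real.sqrt_sq hb, h]

lemma norm_plus (C D : ℤ) (hC1 : 1 ≤ C) (hD0 : 0 ≤ D) :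
    Real.sqrt (Real.Gamma ((C:ℝ) + 1) * Real.Gamma ((D:ℝ) + 1)) * ((D:ℝ) + 1)
      = Real.sqrt ((C:ℝ) * ((D:ℝ) + 1)) *
        Real.sqrt (Real.Gamma ((C:ℝ)) * Real.Gamma ((D:ℝ) + 2)) := by
  have hCr : (1:ℝ) ≤ (C:ℝ) := by exact_mod_cast hC1
  have hDr : (0:ℝ) ≤ (D:ℝ) := by exact_mod_cast hD0
  have hΓC : Real.Gamma ((C:ℝ) + 1) = (C:ℝ) * Real.Gamma (C:ℝ) :=
    Real.Gamma_add_one (by linarith)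
  have hΓD : Real.Gamma ((D:ℝ) + 2) = ((D:ℝ) + 1) * Real.Gamma ((D:ℝ) + 1) := by
    rw [show (D:ℝ) + 2 = ((D:ℝ) + 1) + 1 from by ring]
    exact Real.Gamma_add_one (by linarith)
  have hg1 : (0:ℝ) ≤ Real.Gamma ((C:ℝ) + 1) * Real.Gamma ((D:ℝ) + 1) :=
    mul_nonneg (Real.Gamma_nonneg_of_nonneg (by linarith))
      (Real.Gamma_nonneg_of_nonneg (by linarith))
  have hg2 : (0:ℝ) ≤ (C:ℝ) * ((D:ℝ) + 1) := mul_nonneg (by linarith) (by linarith)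
  have hg3 : (0:ℝ) ≤ Real.Gamma ((C:ℝ)) * Real.Gamma ((D:ℝ) + 2) :=
    mul_nonneg (Real.Gamma_nonneg_of_nonneg (by linarith))
      (Real.Gamma_nonneg_of_nonneg (by linarith))
  apply sqrt_aux (mul_nonneg (Real.sqrt_nonneg _) (by linarith))
    (mul_nonneg (Real.sqrt_nonneg _) (Real.sqrt_nonneg _))
  rw [mul_pow, mul_pow, Real.sq_sqrt hg1, Real.sq_sqrt hg2, Real.sq_sqrt hg3, hΓC, hΓD]
  ring

lemma norm_minus (C D : ℤ) (hC0 : 0 ≤ C) (hD1 : 1 ≤ D) :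
    Real.sqrt (Real.Gamma ((C:ℝ) + 1) * Real.Gamma ((D:ℝ) + 1)) * ((C:ℝ) + 1)
      = Real.sqrt ((D:ℝ) * ((C:ℝ) + 1)) *
        Real.sqrt (Real.Gamma ((C:ℝ) + 2) * Real.Gamma ((D:ℝ))) := by
  have hCr : (0:ℝ) ≤ (C:ℝ) := by exact_mod_cast hC0
  have hDr : (1:ℝ) ≤ (D:ℝ) := by exact_mod_cast hD1
  have hΓD : Real.Gamma ((D:ℝ) + 1) = (D:ℝ) * Real.Gamma (D:ℝ) :=
    Real.Gamma_add_one (by linarith)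
  have hΓC : Real.Gamma ((C:ℝ) + 2) = ((C:ℝ) + 1) * Real.Gamma ((C:ℝ) + 1) := by
    rw [show (C:ℝ) + 2 = ((C:ℝ) + 1) + 1 from by ring]
    exact Real.Gamma_add_one (by linarith)
  have hg1 : (0:ℝ) ≤ Real.Gamma ((C:ℝ) + 1) * Real.Gamma ((D:ℝ) + 1) :=
    mul_nonneg (Real.Gamma_nonneg_of_nonneg (by linarith))
      (Real.Gamma_nonneg_of_nonneg (by linarith))
  have hg2 : (0:ℝ) ≤ (D:ℝ) * ((C:ℝ) + 1) := mul_nonneg (by linarith) (by linarith)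
  have hg3 : (0:ℝ) ≤ Real.Gamma ((C:ℝ) + 2) * Real.Gamma ((D:ℝ)) :=
    mul_nonneg (Real.Gamma_nonneg_of_nonneg (by linarith))
      (Real.Gamma_nonneg_of_nonneg (by linarith))
  apply sqrt_aux (mul_nonneg (Real.sqrt_nonneg _) (by linarith))
    (mul_nonneg (Real.sqrt_nonneg _) (Real.sqrt_nonneg _))
  rw [mul_pow, mul_pow, Real.sq_sqrt hg1, Real.sq_sqrt hg2, Real.sq_sqrt hg3, hΓC, hΓD]
  ring


/-- Formula (3.24): the right regular action of the raising/lowering elements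
`γ₁ ± i γ₂` of `𝔲(2)`, written as explicit differential operators in Euler-angle
coordinates, shifts the second lower index of a Wigner D-function:
`e^{∓iφ}(−cot θ ∂_φ ∓ i ∂_θ + csc θ ∂_ψ) W^{(j,n)}_{m₁,m₂}
  = i √((j±m₂)(j∓m₂+1)) W^{(j,n)}_{m₁,m₂∓1}` (sign `ε = ±1`). -/
theorem wignerD_right_raising_lowering (j m₁ m₂ n ε : ℝ) (hj : HalfInt j) (hj0 : 0 ≤ j)
    (hm₁ : HalfInt m₁) (hm₂ : HalfInt m₂)
    (hjm₁ : ∃ a : ℤ, j + m₁ = a) (hjm₂ : ∃ a : ℤ, j + m₂ = a)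
    (hm₁l : -j ≤ m₁) (hm₁u : m₁ ≤ j) (hm₂l : -j ≤ m₂) (hm₂u : m₂ ≤ j)
    (hε : ε = 1 ∨ ε = -1) (ζ ψ φ : ℝ) (θ : ℝ) (hθ : θ ∈ Set.Ioo 0 Real.pi) :
    Complex.exp (-(ε : ℂ) * Complex.I * (φ : ℂ)) *
        (-((Real.cos θ / Real.sin θ : ℝ) : ℂ) *
            deriv (fun t : ℝ => WignerD j n m₁ m₂ ζ ψ θ t) φ -
          (ε : ℂ) * Complex.I * deriv (fun t : ℝ => WignerD j n m₁ m₂ ζ ψ t φ) θ +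
          (((Real.sin θ)⁻¹ : ℝ) : ℂ) *
            deriv (fun t : ℝ => WignerD j n m₁ m₂ ζ t θ φ) ψ) =
      Complex.I * ((Real.sqrt ((j + ε * m₂) * (j - ε * m₂ + 1)) : ℝ) : ℂ) *
        WignerD j n m₁ (m₂ - ε) ζ ψ θ φ := by
  obtain ⟨hθ1, hθ2⟩ := hθ
  have hpi := Real.pi_pos
  obtain ⟨K, hK⟩ := hj
  obtain ⟨a, ha⟩ := hjm₁
  obtain ⟨c, hc⟩ := hjm₂
  have h2j : j + j = ((K : ℤ) : ℝ) := by rw [hK]; push_cast; ring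
  have hB : j - m₁ = ((K - a : ℤ) : ℝ) := by push_cast; linarith
  have hD : j - m₂ = ((K - c : ℤ) : ℝ) := by push_cast; linarith
  have hA0 : 0 ≤ a := by
    have h : (0:ℝ) ≤ ((a:ℤ):ℝ) := by rw [← ha]; linarith
    exact_mod_cast h
  have hC0 : 0 ≤ c := by
    have h : (0:ℝ) ≤ ((c:ℤ):ℝ) := by rw [← hc]; linarith
    exact_mod_cast h
  have hD0 : 0 ≤ K - c := by
    have h : (0:ℝ) ≤ ((K - c:ℤ):ℝ) := by rw [← hD]; linarith
    exact_mod_cast h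
  have hx : Real.sin (θ/2) ≠ 0 :=
    ne_of_gt (Real.sin_pos_of_pos_of_lt_pi (by linarith) (by linarith))
  have hy : Real.cos (θ/2) ≠ 0 :=
    ne_of_gt (Real.cos_pos_of_mem_Ioo ⟨by linarith, by linarith⟩)
  have hcond : (-j ≤ m₁ ∧ m₁ ≤ j) ∧ (-j ≤ m₂ ∧ m₂ ≤ j) ∧
      (∃ b : ℤ, j + m₁ = b) ∧ (∃ b : ℤ, j - m₁ = b) ∧
      (∃ b : ℤ, j + m₂ = b) ∧ (∃ b : ℤ, j - m₂ = b) :=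
    ⟨⟨hm₁l, hm₁u⟩, ⟨hm₂l, hm₂u⟩, ⟨a, ha⟩, ⟨K - a, hB⟩, ⟨c, hc⟩, ⟨K - c, hD⟩⟩
  -- the three derivatives
  have hfun1 : (fun t : ℝ => WignerD j n m₁ m₂ ζ ψ θ t) = fun t : ℝ =>
      ((Real.sqrt (Real.Gamma (j + m₁ + 1) * Real.Gamma (j - m₁ + 1)) *
        Real.sqrt (Real.Gamma (j + m₂ + 1) * Real.Gamma (j - m₂ + 1)) : ℝ) : ℂ) *
      Complex.exp (Complex.I * n * ζ) *
      Complex.exp (Complex.I * (m₁ * ψ + m₂ * t)) * ((wignerd j m₁ m₂ θ : ℝ) : ℂ) := by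
    funext t
    rw [WignerD, if_pos hcond]
  have hfun2 : (fun t : ℝ => WignerD j n m₁ m₂ ζ t θ φ) = fun t : ℝ =>
      ((Real.sqrt (Real.Gamma (j + m₁ + 1) * Real.Gamma (j - m₁ + 1)) *
        Real.sqrt (Real.Gamma (j + m₂ + 1) * Real.Gamma (j - m₂ + 1)) : ℝ) : ℂ) *
      Complex.exp (Complex.I * n * ζ) *
      Complex.exp (Complex.I * (m₁ * t + m₂ * φ)) * ((wignerd j m₁ m₂ θ : ℝ) : ℂ) := by
    funext t
    rw [WignerD, if_pos hcond]
  have hfun3 : (fun t : ℝ => WignerD j n m₁ m₂ ζ ψ t φ) = fun t : ℝ =>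
      (((Real.sqrt (Real.Gamma (j + m₁ + 1) * Real.Gamma (j - m₁ + 1)) *
        Real.sqrt (Real.Gamma (j + m₂ + 1) * Real.Gamma (j - m₂ + 1)) : ℝ) : ℂ) *
      Complex.exp (Complex.I * n * ζ) *
      Complex.exp (Complex.I * (m₁ * ψ + m₂ * φ))) * ((wignerd j m₁ m₂ t : ℝ) : ℂ) := by
    funext t
    rw [WignerD, if_pos hcond]
  have d1 : deriv (fun t : ℝ => WignerD j n m₁ m₂ ζ ψ θ t) φ =
      ((Real.sqrt (Real.Gamma (j + m₁ + 1) * Real.Gamma (j - m₁ + 1)) *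
        Real.sqrt (Real.Gamma (j + m₂ + 1) * Real.Gamma (j - m₂ + 1)) : ℝ) : ℂ) *
      Complex.exp (Complex.I * n * ζ) *
      (Complex.exp (Complex.I * ((m₁ : ℂ) * (ψ : ℂ) + (m₂ : ℂ) * (φ : ℂ))) *
        (Complex.I * (m₂ : ℂ))) * ((wignerd j m₁ m₂ θ : ℝ) : ℂ) := by
    rw [hfun1]
    have l1 : HasDerivAt (fun w : ℂ => Complex.I * ((m₁:ℂ) * (ψ:ℂ) + (m₂:ℂ) * w))
        (Complex.I * (m₂:ℂ)) ((φ:ℝ):ℂ) := by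
      simpa using
        (((hasDerivAt_id ((φ:ℝ):ℂ)).const_mul (m₂:ℂ)).const_add ((m₁:ℂ) * (ψ:ℂ))).const_mul
          Complex.I
    exact (((l1.cexp.comp_ofReal).const_mul _).mul_const _).deriv
  have d2 : deriv (fun t : ℝ => WignerD j n m₁ m₂ ζ t θ φ) ψ =
      ((Real.sqrt (Real.Gamma (j + m₁ + 1) * Real.Gamma (j - m₁ + 1)) *
        Real.sqrt (Real.Gamma (j + m₂ + 1) * Real.Gamma (j - m₂ + 1)) : ℝ) : ℂ) *
      Complex.exp (Complex.I * n * ζ) *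
      (Complex.exp (Complex.I * ((m₁ : ℂ) * (ψ : ℂ) + (m₂ : ℂ) * (φ : ℂ))) *
        (Complex.I * (m₁ : ℂ))) * ((wignerd j m₁ m₂ θ : ℝ) : ℂ) := by
    rw [hfun2]
    have l2 : HasDerivAt (fun w : ℂ => Complex.I * ((m₁:ℂ) * w + (m₂:ℂ) * (φ:ℂ)))
        (Complex.I * (m₁:ℂ)) ((ψ:ℝ):ℂ) := by
      simpa using
        (((hasDerivAt_id ((ψ:ℝ):ℂ)).const_mul (m₁:ℂ)).add_const ((m₂:ℂ) * (φ:ℂ))).const_mul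
          Complex.I
    exact (((l2.cexp.comp_ofReal).const_mul _).mul_const _).deriv
  have d3 : deriv (fun t : ℝ => WignerD j n m₁ m₂ ζ ψ t φ) θ =
      (((Real.sqrt (Real.Gamma (j + m₁ + 1) * Real.Gamma (j - m₁ + 1)) *
        Real.sqrt (Real.Gamma (j + m₂ + 1) * Real.Gamma (j - m₂ + 1)) : ℝ) : ℂ) *
      Complex.exp (Complex.I * n * ζ) *
      Complex.exp (Complex.I * ((m₁ : ℂ) * (ψ : ℂ) + (m₂ : ℂ) * (φ : ℂ)))) *
        ((wignerdDeriv a c (K - c) θ : ℝ) : ℂ) := by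
    rw [hfun3]
    exact (((wignerd_hasDerivAt j m₁ m₂ a c (K - c) ha hc hD θ hx hy).ofReal_comp).const_mul
      _).deriv
  rw [d1, d2, d3, WignerD]
  rcases hε with rfl | rfl
  · -- raising case ε = 1
    rw [show (j + 1 * m₂) * (j - 1 * m₂ + 1) = (j + m₂) * (j - m₂ + 1) from by ring,
      show -((1:ℝ):ℂ) * Complex.I * (φ:ℂ) = -(Complex.I * (φ:ℂ)) from by push_cast; ring]
    have hkey := real_key_plus j m₁ m₂ a c (K - c) ha hc hD hA0 hD0 hθ1 hθ2
    have hkeyC : -((wignerdDeriv a c (K - c) θ : ℝ) : ℂ) +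
        ((m₁:ℂ) * (((Real.sin θ : ℝ):ℂ))⁻¹ -
          (m₂:ℂ) * (((Real.cos θ : ℝ):ℂ) / ((Real.sin θ : ℝ):ℂ))) *
          ((wignerd j m₁ m₂ θ : ℝ):ℂ)
        = ((K:ℂ) - (c:ℂ) + 1) * ((wignerd j m₁ (m₂ - 1) θ : ℝ):ℂ) := by
      exact_mod_cast congrArg (fun r : ℝ => (r : ℂ)) hkey
    have hcancel : Complex.exp (-(Complex.I * (φ:ℂ))) * Complex.exp (Complex.I * (φ:ℂ)) = 1 := by
      rw [← Complex.exp_add]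
      norm_num
    have hsplit : Complex.exp (Complex.I * ((m₁:ℂ) * (ψ:ℂ) + (m₂:ℂ) * (φ:ℂ)))
        = Complex.exp (Complex.I * (φ:ℂ)) *
          Complex.exp (Complex.I * ((m₁:ℂ) * (ψ:ℂ) + ((m₂:ℂ) - 1) * (φ:ℂ))) := by
      rw [← Complex.exp_add]
      congr 1
      ring
    by_cases hC1 : 1 ≤ c
    · have hcond' : (-j ≤ m₁ ∧ m₁ ≤ j) ∧ (-j ≤ m₂ - 1 ∧ m₂ - 1 ≤ j) ∧
          (∃ b : ℤ, j + m₁ = b) ∧ (∃ b : ℤ, j - m₁ = b) ∧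
          (∃ b : ℤ, j + (m₂ - 1) = b) ∧ (∃ b : ℤ, j - (m₂ - 1) = b) := by
        have hcr : (1:ℝ) ≤ ((c:ℤ):ℝ) := by exact_mod_cast hC1
        exact ⟨⟨hm₁l, hm₁u⟩, ⟨by linarith, by linarith⟩, ⟨a, ha⟩, ⟨K - a, hB⟩,
          ⟨c - 1, by push_cast; linarith⟩, ⟨K - c + 1, by push_cast; linarith⟩⟩
      rw [if_pos hcond']
      have hnorm : Real.sqrt (Real.Gamma (j + m₂ + 1) * Real.Gamma (j - m₂ + 1)) *
          (((K - c : ℤ):ℝ) + 1)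
          = Real.sqrt ((j + m₂) * (j - m₂ + 1)) *
            Real.sqrt (Real.Gamma (j + (m₂ - 1) + 1) * Real.Gamma (j - (m₂ - 1) + 1)) := by
        have hcr : (1:ℝ) ≤ ((c:ℤ):ℝ) := by exact_mod_cast hC1
        rw [show j + m₂ + 1 = ((c:ℤ):ℝ) + 1 from by linarith,
          show j - m₂ + 1 = ((K - c : ℤ):ℝ) + 1 from by linarith,
          show j + (m₂ - 1) + 1 = ((c:ℤ):ℝ) from by linarith,
          show j - (m₂ - 1) + 1 = ((K - c : ℤ):ℝ) + 2 from by linarith,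
          show j + m₂ = ((c:ℤ):ℝ) from hc]
        exact norm_plus c (K - c) hC1 hD0
      have hnormC : ((Real.sqrt (Real.Gamma (j + m₂ + 1) * Real.Gamma (j - m₂ + 1)) : ℝ):ℂ) *
          ((K:ℂ) - (c:ℂ) + 1)
          = ((Real.sqrt ((j + m₂) * (j - m₂ + 1)) : ℝ):ℂ) *
            ((Real.sqrt (Real.Gamma (j + (m₂ - 1) + 1) * Real.Gamma (j - (m₂ - 1) + 1)) : ℝ):ℂ) := by
        exact_mod_cast congrArg (fun r : ℝ => (r : ℂ)) hnorm
      simp only [Complex.ofReal_mul, Complex.ofReal_div, Complex.ofReal_inv, Complex.ofReal_sub,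
        Complex.ofReal_one, Complex.ofReal_neg, Complex.ofReal_add]
      rw [hsplit]
      linear_combination
        (Complex.exp (Complex.I * ((m₁:ℂ) * (ψ:ℂ) + ((m₂:ℂ) - 1) * (φ:ℂ))) *
          (Real.sqrt (Real.Gamma (j + m₁ + 1) * Real.Gamma (j - m₁ + 1)) : ℂ) *
          (Real.sqrt (Real.Gamma (j + m₂ + 1) * Real.Gamma (j - m₂ + 1)) : ℂ) *
          Complex.exp (Complex.I * (n:ℂ) * (ζ:ℂ)) * Complex.I *
          (-((wignerdDeriv a c (K - c) θ : ℝ) : ℂ) +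
            ((m₁:ℂ) * (((Real.sin θ : ℝ):ℂ))⁻¹ -
              (m₂:ℂ) * (((Real.cos θ : ℝ):ℂ) / ((Real.sin θ : ℝ):ℂ))) *
              ((wignerd j m₁ m₂ θ : ℝ):ℂ))) * hcancel
        + (Complex.exp (Complex.I * ((m₁:ℂ) * (ψ:ℂ) + ((m₂:ℂ) - 1) * (φ:ℂ))) *
            Complex.exp (Complex.I * (n:ℂ) * (ζ:ℂ)) * Complex.I *
            (Real.sqrt (Real.Gamma (j + m₁ + 1) * Real.Gamma (j - m₁ + 1)) : ℂ) *
            (Real.sqrt (Real.Gamma (j + m₂ + 1) * Real.Gamma (j - m₂ + 1)) : ℂ)) * hkeyC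
        + (Complex.exp (Complex.I * ((m₁:ℂ) * (ψ:ℂ) + ((m₂:ℂ) - 1) * (φ:ℂ))) *
            Complex.exp (Complex.I * (n:ℂ) * (ζ:ℂ)) * Complex.I *
            (Real.sqrt (Real.Gamma (j + m₁ + 1) * Real.Gamma (j - m₁ + 1)) : ℂ) *
            ((wignerd j m₁ (m₂ - 1) θ : ℝ):ℂ)) * hnormC
    · -- degenerate case : c = 0, right-hand side vanishes
      have hc0 : c = 0 := by omega
      have hd'0 : wignerd j m₁ (m₂ - 1) θ = 0 := by
        rw [wignerd_eq j m₁ (m₂ - 1) a (c - 1) (K - c + 1) ha (by push_cast; linarith)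
          (by push_cast; linarith) θ,
          Finset.Icc_eq_empty (by omega : ¬(max 0 (a - (c - 1)) ≤ min (K - c + 1) a))]
        exact Finset.sum_empty
      have hcond'f : ¬((-j ≤ m₁ ∧ m₁ ≤ j) ∧ (-j ≤ m₂ - 1 ∧ m₂ - 1 ≤ j) ∧
          (∃ b : ℤ, j + m₁ = b) ∧ (∃ b : ℤ, j - m₁ = b) ∧
          (∃ b : ℤ, j + (m₂ - 1) = b) ∧ (∃ b : ℤ, j - (m₂ - 1) = b)) := by
        rintro ⟨-, ⟨h1, -⟩, -⟩
        have : j + m₂ = (0:ℝ) := by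
          rw [hc]; rw [hc0]; norm_num
        linarith
      rw [if_neg hcond'f, mul_zero]
      have hdC : ((wignerd j m₁ (m₂ - 1) θ : ℝ) : ℂ) = 0 := by
        rw [hd'0]; norm_num
      simp only [Complex.ofReal_mul, Complex.ofReal_div, Complex.ofReal_inv, Complex.ofReal_sub,
        Complex.ofReal_one, Complex.ofReal_neg, Complex.ofReal_add]
      linear_combination
        (Complex.exp (-(Complex.I * (φ:ℂ))) *
          Complex.exp (Complex.I * ((m₁:ℂ) * (ψ:ℂ) + (m₂:ℂ) * (φ:ℂ))) *
          Complex.exp (Complex.I * (n:ℂ) * (ζ:ℂ)) * Complex.I *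
          (Real.sqrt (Real.Gamma (j + m₁ + 1) * Real.Gamma (j - m₁ + 1)) : ℂ) *
          (Real.sqrt (Real.Gamma (j + m₂ + 1) * Real.Gamma (j - m₂ + 1)) : ℂ)) * hkeyC
        + (Complex.exp (-(Complex.I * (φ:ℂ))) *
            Complex.exp (Complex.I * ((m₁:ℂ) * (ψ:ℂ) + (m₂:ℂ) * (φ:ℂ))) *
            Complex.exp (Complex.I * (n:ℂ) * (ζ:ℂ)) * Complex.I *
            (Real.sqrt (Real.Gamma (j + m₁ + 1) * Real.Gamma (j - m₁ + 1)) : ℂ) *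
            (Real.sqrt (Real.Gamma (j + m₂ + 1) * Real.Gamma (j - m₂ + 1)) : ℂ) *
            (((K:ℂ) - (c:ℂ)) + 1)) * hdC
  · -- lowering case ε = -1
    rw [show m₂ - (-1 : ℝ) = m₂ + 1 from by ring,
      show (j + (-1) * m₂) * (j - (-1) * m₂ + 1) = (j - m₂) * (j + m₂ + 1) from by ring,
      show -(((-1:ℝ)):ℂ) * Complex.I * (φ:ℂ) = Complex.I * (φ:ℂ) from by push_cast; ring]
    have hkey := real_key_minus j m₁ m₂ a c (K - c) ha hc hD hA0 hD0 hθ1 hθ2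
    have hkeyC : ((wignerdDeriv a c (K - c) θ : ℝ) : ℂ) +
        ((m₁:ℂ) * (((Real.sin θ : ℝ):ℂ))⁻¹ -
          (m₂:ℂ) * (((Real.cos θ : ℝ):ℂ) / ((Real.sin θ : ℝ):ℂ))) *
          ((wignerd j m₁ m₂ θ : ℝ):ℂ)
        = ((c:ℂ) + 1) * ((wignerd j m₁ (m₂ + 1) θ : ℝ):ℂ) := by
      exact_mod_cast congrArg (fun r : ℝ => (r : ℂ)) hkey
    have hcancel : Complex.exp (Complex.I * (φ:ℂ)) * Complex.exp (-(Complex.I * (φ:ℂ))) = 1 := by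
      rw [← Complex.exp_add]
      norm_num
    have hsplit : Complex.exp (Complex.I * ((m₁:ℂ) * (ψ:ℂ) + (m₂:ℂ) * (φ:ℂ)))
        = Complex.exp (-(Complex.I * (φ:ℂ))) *
          Complex.exp (Complex.I * ((m₁:ℂ) * (ψ:ℂ) + ((m₂:ℂ) + 1) * (φ:ℂ))) := by
      rw [← Complex.exp_add]
      congr 1
      ring
    by_cases hD1 : 1 ≤ K - c
    · have hcond' : (-j ≤ m₁ ∧ m₁ ≤ j) ∧ (-j ≤ m₂ + 1 ∧ m₂ + 1 ≤ j) ∧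
          (∃ b : ℤ, j + m₁ = b) ∧ (∃ b : ℤ, j - m₁ = b) ∧
          (∃ b : ℤ, j + (m₂ + 1) = b) ∧ (∃ b : ℤ, j - (m₂ + 1) = b) := by
        have hdr : (1:ℝ) ≤ ((K - c:ℤ):ℝ) := by exact_mod_cast hD1
        exact ⟨⟨hm₁l, hm₁u⟩, ⟨by linarith, by linarith⟩, ⟨a, ha⟩, ⟨K - a, hB⟩,
          ⟨c + 1, by push_cast; linarith⟩, ⟨K - c - 1, by push_cast; linarith⟩⟩
      rw [if_pos hcond']
      have hnorm : Real.sqrt (Real.Gamma (j + m₂ + 1) * Real.Gamma (j - m₂ + 1)) *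
          (((c : ℤ):ℝ) + 1)
          = Real.sqrt ((j - m₂) * (j + m₂ + 1)) *
            Real.sqrt (Real.Gamma (j + (m₂ + 1) + 1) * Real.Gamma (j - (m₂ + 1) + 1)) := by
        have hdr : (1:ℝ) ≤ ((K - c:ℤ):ℝ) := by exact_mod_cast hD1
        rw [show j + m₂ + 1 = ((c:ℤ):ℝ) + 1 from by linarith,
          show j - m₂ + 1 = ((K - c : ℤ):ℝ) + 1 from by linarith,
          show j + (m₂ + 1) + 1 = ((c:ℤ):ℝ) + 2 from by linarith,
          show j - (m₂ + 1) + 1 = ((K - c : ℤ):ℝ) from by linarith,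
          show j - m₂ = ((K - c:ℤ):ℝ) from hD]
        exact norm_minus c (K - c) hC0 hD1
      have hnormC : ((Real.sqrt (Real.Gamma (j + m₂ + 1) * Real.Gamma (j - m₂ + 1)) : ℝ):ℂ) *
          ((c:ℂ) + 1)
          = ((Real.sqrt ((j - m₂) * (j + m₂ + 1)) : ℝ):ℂ) *
            ((Real.sqrt (Real.Gamma (j + (m₂ + 1) + 1) * Real.Gamma (j - (m₂ + 1) + 1)) : ℝ):ℂ) := by
        exact_mod_cast congrArg (fun r : ℝ => (r : ℂ)) hnorm
      simp only [Complex.ofReal_mul, Complex.ofReal_div, Complex.ofReal_inv, Complex.ofReal_sub,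
        Complex.ofReal_one, Complex.ofReal_neg, Complex.ofReal_add]
      rw [hsplit]
      linear_combination
        (Complex.exp (Complex.I * ((m₁:ℂ) * (ψ:ℂ) + ((m₂:ℂ) + 1) * (φ:ℂ))) *
          (Real.sqrt (Real.Gamma (j + m₁ + 1) * Real.Gamma (j - m₁ + 1)) : ℂ) *
          (Real.sqrt (Real.Gamma (j + m₂ + 1) * Real.Gamma (j - m₂ + 1)) : ℂ) *
          Complex.exp (Complex.I * (n:ℂ) * (ζ:ℂ)) * Complex.I *
          (((wignerdDeriv a c (K - c) θ : ℝ) : ℂ) +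
            ((m₁:ℂ) * (((Real.sin θ : ℝ):ℂ))⁻¹ -
              (m₂:ℂ) * (((Real.cos θ : ℝ):ℂ) / ((Real.sin θ : ℝ):ℂ))) *
              ((wignerd j m₁ m₂ θ : ℝ):ℂ))) * hcancel
        + (Complex.exp (Complex.I * ((m₁:ℂ) * (ψ:ℂ) + ((m₂:ℂ) + 1) * (φ:ℂ))) *
            Complex.exp (Complex.I * (n:ℂ) * (ζ:ℂ)) * Complex.I *
            (Real.sqrt (Real.Gamma (j + m₁ + 1) * Real.Gamma (j - m₁ + 1)) : ℂ) *
            (Real.sqrt (Real.Gamma (j + m₂ + 1) * Real.Gamma (j - m₂ + 1)) : ℂ)) * hkeyC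
        + (Complex.exp (Complex.I * ((m₁:ℂ) * (ψ:ℂ) + ((m₂:ℂ) + 1) * (φ:ℂ))) *
            Complex.exp (Complex.I * (n:ℂ) * (ζ:ℂ)) * Complex.I *
            (Real.sqrt (Real.Gamma (j + m₁ + 1) * Real.Gamma (j - m₁ + 1)) : ℂ) *
            ((wignerd j m₁ (m₂ + 1) θ : ℝ):ℂ)) * hnormC
    · -- degenerate case : K - c = 0, right-hand side vanishes
      have hd0 : K - c = 0 := by omega
      have hd'0 : wignerd j m₁ (m₂ + 1) θ = 0 := by
        rw [wignerd_eq j m₁ (m₂ + 1) a (c + 1) (K - c - 1) ha (by push_cast; linarith)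
          (by push_cast; linarith) θ,
          Finset.Icc_eq_empty (by omega : ¬(max 0 (a - (c + 1)) ≤ min (K - c - 1) a))]
        exact Finset.sum_empty
      have hcond'f : ¬((-j ≤ m₁ ∧ m₁ ≤ j) ∧ (-j ≤ m₂ + 1 ∧ m₂ + 1 ≤ j) ∧
          (∃ b : ℤ, j + m₁ = b) ∧ (∃ b : ℤ, j - m₁ = b) ∧
          (∃ b : ℤ, j + (m₂ + 1) = b) ∧ (∃ b : ℤ, j - (m₂ + 1) = b)) := by
        rintro ⟨-, ⟨-, h1⟩, -⟩
        have : j - m₂ = (0:ℝ) := by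
          rw [hD]; rw [hd0]; norm_num
        linarith
      rw [if_neg hcond'f, mul_zero]
      have hdC : ((wignerd j m₁ (m₂ + 1) θ : ℝ) : ℂ) = 0 := by
        rw [hd'0]; norm_num
      simp only [Complex.ofReal_mul, Complex.ofReal_div, Complex.ofReal_inv, Complex.ofReal_sub,
        Complex.ofReal_one, Complex.ofReal_neg, Complex.ofReal_add]
      linear_combination
        (Complex.exp (Complex.I * (φ:ℂ)) *
          Complex.exp (Complex.I * ((m₁:ℂ) * (ψ:ℂ) + (m₂:ℂ) * (φ:ℂ))) *
          Complex.exp (Complex.I * (n:ℂ) * (ζ:ℂ)) * Complex.I *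
          (Real.sqrt (Real.Gamma (j + m₁ + 1) * Real.Gamma (j - m₁ + 1)) : ℂ) *
          (Real.sqrt (Real.Gamma (j + m₂ + 1) * Real.Gamma (j - m₂ + 1)) : ℂ)) * hkeyC
        + (Complex.exp (Complex.I * (φ:ℂ)) *
            Complex.exp (Complex.I * ((m₁:ℂ) * (ψ:ℂ) + (m₂:ℂ) * (φ:ℂ))) *
            Complex.exp (Complex.I * (n:ℂ) * (ζ:ℂ)) * Complex.I *
            (Real.sqrt (Real.Gamma (j + m₁ + 1) * Real.Gamma (j - m₁ + 1)) : ℂ) *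
            (Real.sqrt (Real.Gamma (j + m₂ + 1) * Real.Gamma (j - m₂ + 1)) : ℂ) *
            ((c:ℂ) + 1)) * hdC
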